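/- Let β be an odd Gaussian integer that is not of the form η·β₁² for a unit η and β₁ ∈ ℤ[i]. Then ∑_{α mod β} [α/β] = 0, where α runs over residue classes of ℤ[i]/βℤ[i]; if β = ηβ₁² then the sum equals φ(β), the number of residue classes coprime to β. -/

import Mathlib

/-- The quadratic residue symbol `[α/π]` for an irreducible odd Gaussian `π`:
`0` if `π ∣ α`, `1` if `α` is a nonzero square mod `π`, `-1` otherwise. -/
noncomputable def gQR (α π : GaussianInt) : ℤ := by
  classical
  exact if π ∣ α then 0 else if ∃ β : GaussianInt, π ∣ (β ^ 2 - α) then 1 else -1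

/-- The quadratic residue symbol `[α/β]`, extended multiplicatively in the
denominator over a factorization of `β` into irreducibles. -/
noncomputable def gSym (α β : GaussianInt) : ℤ :=
  ((UniqueFactorizationMonoid.factors β).map fun π => gQR α π).prod

/-- Complex conjugation on Gaussian integers. -/
def gconj (z : GaussianInt) : GaussianInt := ⟨z.re, -z.im⟩

/-- The number of elements of a finite set `S` coprime to `β`. -/
noncomputable def coprimeCount (S : Finset GaussianInt) (β : GaussianInt) : ℕ := by
  classical
  exact (S.filter fun s => IsCoprime s β).card

open UniqueFactorizationMonoid

attribute [local instance] Ideal.Quotient.field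

lemma gQR_congr {π a b : GaussianInt} (h : π ∣ a - b) : gQR a π = gQR b π := by
  have h1 : π ∣ a ↔ π ∣ b := by
    constructor
    · intro ha; simpa using dvd_sub ha h
    · intro hb; simpa using dvd_add hb h
  have h2 : (∃ c : GaussianInt, π ∣ c ^ 2 - a) ↔ (∃ c : GaussianInt, π ∣ c ^ 2 - b) := by
    constructor
    · rintro ⟨c, hc⟩; exact ⟨c, by simpa using dvd_add hc h⟩
    · rintro ⟨c, hc⟩; exact ⟨c, by simpa using dvd_sub hc h⟩
  by_cases hpa : π ∣ a
  · simp only [gQR, if_pos hpa, if_pos (h1.mp hpa)]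
  · have hpb : ¬ π ∣ b := fun hb => hpa (h1.mpr hb)
    by_cases hsq : ∃ c : GaussianInt, π ∣ c ^ 2 - a
    · simp only [gQR, if_neg hpa, if_neg hpb, if_pos hsq, if_pos (h2.mp hsq)]
    · simp only [gQR, if_neg hpa, if_neg hpb, if_neg hsq,
        if_neg (fun hs => hsq (h2.mpr hs))]

lemma gQR_assoc {π π' : GaussianInt} (h : Associated π π') (a : GaussianInt) :
    gQR a π = gQR a π' := by
  have h1 : π ∣ a ↔ π' ∣ a := h.dvd_iff_dvd_left
  have h2 : ∀ c : GaussianInt, (π ∣ c ^ 2 - a ↔ π' ∣ c ^ 2 - a) :=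
    fun c => h.dvd_iff_dvd_left
  by_cases hpa : π ∣ a
  · simp only [gQR, if_pos hpa, if_pos (h1.mp hpa)]
  · have hpb : ¬ π' ∣ a := fun hb => hpa (h1.mpr hb)
    by_cases hsq : ∃ c : GaussianInt, π ∣ c ^ 2 - a
    · obtain ⟨c, hc⟩ := hsq
      have e1 : ∃ c : GaussianInt, π ∣ c ^ 2 - a := ⟨c, hc⟩
      have e2 : ∃ c : GaussianInt, π' ∣ c ^ 2 - a := ⟨c, (h2 c).mp hc⟩
      simp only [gQR, if_neg hpa, if_neg hpb, if_pos e1, if_pos e2]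
    · have hsq' : ¬ ∃ c : GaussianInt, π' ∣ c ^ 2 - a := by
        rintro ⟨c, hc⟩; exact hsq ⟨c, (h2 c).mpr hc⟩
      simp only [gQR, if_neg hpa, if_neg hpb, if_neg hsq, if_neg hsq']

lemma gQR_one {π : GaussianInt} (hπ : ¬ IsUnit π) : gQR 1 π = 1 := by
  have h1 : ¬ π ∣ 1 := fun h => hπ (isUnit_of_dvd_one h)
  have h2 : ∃ c : GaussianInt, π ∣ c ^ 2 - 1 := ⟨1, by simp⟩
  simp only [gQR, h1, h2, if_false, if_true, if_neg, if_pos]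

noncomputable def gQRdef : True := trivial

lemma gQR_eq_char {π : GaussianInt} [(Ideal.span {π}).IsMaximal]
    [Fintype (GaussianInt ⧸ Ideal.span {π})] [DecidableEq (GaussianInt ⧸ Ideal.span {π})]
    (a : GaussianInt) :
    gQR a π = quadraticChar (GaussianInt ⧸ Ideal.span {π})
      (Ideal.Quotient.mk (Ideal.span {π}) a) := by
  have hmk : ∀ x : GaussianInt, Ideal.Quotient.mk (Ideal.span {π}) x = 0 ↔ π ∣ x := by
    intro x
    rw [Ideal.Quotient.eq_zero_iff_mem, Ideal.mem_span_singleton]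
  by_cases hpa : π ∣ a
  · rw [show Ideal.Quotient.mk (Ideal.span {π}) a = 0 from (hmk a).mpr hpa]
    simp only [gQR, if_pos hpa, quadraticChar_zero]
  · have ha0 : Ideal.Quotient.mk (Ideal.span {π}) a ≠ 0 := fun h => hpa ((hmk a).mp h)
    have hiff : (∃ c : GaussianInt, π ∣ c ^ 2 - a) ↔
        IsSquare (Ideal.Quotient.mk (Ideal.span {π}) a) := by
      constructor
      · rintro ⟨c, hc⟩
        refine ⟨Ideal.Quotient.mk _ c, ?_⟩
        have h0 := (hmk _).mpr hc
        rw [RingHom.map_sub, RingHom.map_pow, sub_eq_zero] at h0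
        rw [← h0]; ring
      · rintro ⟨r, hr⟩
        obtain ⟨c, rfl⟩ := Ideal.Quotient.mk_surjective r
        refine ⟨c, (hmk _).mp ?_⟩
        rw [RingHom.map_sub, RingHom.map_pow, hr, sub_eq_zero]; ring
    by_cases hsq : ∃ c : GaussianInt, π ∣ c ^ 2 - a
    · rw [(quadraticChar_one_iff_isSquare ha0).mpr (hiff.mp hsq)]
      simp only [gQR, if_neg hpa, if_pos hsq]
    · rw [quadraticChar_neg_one_iff_not_isSquare.mpr (fun hs => hsq (hiff.mpr hs))]
      simp only [gQR, if_neg hpa, if_neg hsq]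

lemma gQR_mul {π : GaussianInt} (hπ : Prime π)
    (hfin : Finite (GaussianInt ⧸ Ideal.span {π})) (a b : GaussianInt) :
    gQR (a * b) π = gQR a π * gQR b π := by
  classical
  haveI : (Ideal.span {π}).IsMaximal :=
    PrincipalIdealRing.isMaximal_of_irreducible hπ.irreducible
  haveI := Fintype.ofFinite (GaussianInt ⧸ Ideal.span {π})
  rw [gQR_eq_char, gQR_eq_char, gQR_eq_char, RingHom.map_mul, map_mul]

lemma gQR_exists_neg_one {π : GaussianInt} (hπ : Prime π) (h2 : ¬ π ∣ 2)
    (hfin : Finite (GaussianInt ⧸ Ideal.span {π})) :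
    ∃ u : GaussianInt, gQR u π = -1 := by
  classical
  haveI : (Ideal.span {π}).IsMaximal :=
    PrincipalIdealRing.isMaximal_of_irreducible hπ.irreducible
  haveI := Fintype.ofFinite (GaussianInt ⧸ Ideal.span {π})
  have hchar : ringChar (GaussianInt ⧸ Ideal.span {π}) ≠ 2 := by
    intro hc
    apply h2
    have : ((2 : ℕ) : GaussianInt ⧸ Ideal.span {π}) = 0 := by
      rw [← hc]; exact ringChar.Nat.cast_ringChar
    rw [show ((2 : ℕ) : GaussianInt ⧸ Ideal.span {π}) =
        Ideal.Quotient.mk (Ideal.span {π}) 2 by push_cast; rfl] at this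
    rwa [Ideal.Quotient.eq_zero_iff_mem, Ideal.mem_span_singleton] at this
  obtain ⟨x, hx⟩ := quadraticChar_exists_neg_one hchar
  obtain ⟨u, rfl⟩ := Ideal.Quotient.mk_surjective x
  exact ⟨u, by rw [gQR_eq_char]; exact hx⟩

lemma gQR_pm {π s : GaussianInt} (hnd : ¬ π ∣ s) : gQR s π = 1 ∨ gQR s π = -1 := by
  by_cases hsq : ∃ c : GaussianInt, π ∣ c ^ 2 - s
  · left; simp only [gQR, if_neg hnd, if_pos hsq]
  · right; simp only [gQR, if_neg hnd, if_neg hsq]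

lemma gQR_zero_of_dvd {π s : GaussianInt} (h : π ∣ s) : gQR s π = 0 := by
  simp only [gQR, if_pos h]

lemma quot_finite_of_dvd {π β : GaussianInt} (h : π ∣ β)
    (hfin : Finite (GaussianInt ⧸ Ideal.span {β})) :
    Finite (GaussianInt ⧸ Ideal.span {π}) := by
  have hle : Ideal.span {β} ≤ Ideal.span {π} := by
    rw [Ideal.span_singleton_le_span_singleton]; exact h
  have hsurj : Function.Surjective
      (Ideal.Quotient.factor hle) := by
    intro x
    obtain ⟨y, rfl⟩ := Ideal.Quotient.mk_surjective x
    exact ⟨Ideal.Quotient.mk _ y, rfl⟩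
  exact Finite.of_surjective _ hsurj

lemma mem_factors_dvd {π β : GaussianInt} (hβ : β ≠ 0) (h : π ∈ factors β) : π ∣ β :=
  (Multiset.dvd_prod h).trans (factors_prod hβ).dvd

lemma gSym_congr {β a b : GaussianInt} (hβ : β ≠ 0) (h : β ∣ a - b) :
    gSym a β = gSym b β := by
  unfold gSym
  congr 1
  exact Multiset.map_congr rfl fun π hπ => gQR_congr ((mem_factors_dvd hβ hπ).trans h)

lemma gSym_mul {β : GaussianInt} (hβ : β ≠ 0)
    (hfin : Finite (GaussianInt ⧸ Ideal.span {β})) (a b : GaussianInt) :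
    gSym (a * b) β = gSym a β * gSym b β := by
  unfold gSym
  rw [show (factors β).map (fun π => gQR (a * b) π)
      = (factors β).map (fun π => gQR a π * gQR b π) from
    Multiset.map_congr rfl fun π hπ =>
      gQR_mul (prime_of_factor π hπ) (quot_finite_of_dvd (mem_factors_dvd hβ hπ) hfin) a b]
  rw [Multiset.prod_map_mul]

lemma gSym_eq_zero {β s : GaussianInt} (hβ : β ≠ 0) (h : ¬ IsCoprime s β) :
    gSym s β = 0 := by
  have hex : ∃ q : GaussianInt, Irreducible q ∧ q ∣ s ∧ q ∣ β := by
    by_contra hq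
    apply h
    apply isCoprime_of_dvd s β (fun hz => hβ hz.2)
    intro z hznu hz0 hzs hzβ
    obtain ⟨q, hqi, hqz⟩ := WfDvdMonoid.exists_irreducible_factor hznu hz0
    exact hq ⟨q, hqi, hqz.trans hzs, hqz.trans hzβ⟩
  obtain ⟨q, hqi, hqs, hqβ⟩ := hex
  have hqprime : Prime q := UniqueFactorizationMonoid.irreducible_iff_prime.mp hqi
  obtain ⟨π, hπmem, hqπ⟩ :=
    hqprime.exists_mem_multiset_dvd (hqβ.trans (factors_prod hβ).symm.dvd)
  have hassoc : Associated q π := hqi.associated_of_dvd (irreducible_of_factor π hπmem) hqπ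
  have hπs : π ∣ s := hassoc.symm.dvd.trans hqs
  exact Multiset.prod_eq_zero
    (Multiset.mem_map.mpr ⟨π, hπmem, gQR_zero_of_dvd hπs⟩)

lemma map_gQR_eq_of_rel {s t : Multiset GaussianInt} (h : Multiset.Rel Associated s t)
    (a : GaussianInt) : s.map (fun π => gQR a π) = t.map (fun π => gQR a π) := by
  induction h with
  | zero => rfl
  | @cons x y s t hxy hst ih => simp only [Multiset.map_cons, ih, gQR_assoc hxy a]

lemma gSym_sq_eq_one {β η β₁ s : GaussianInt} (hβ : β ≠ 0) (hη : IsUnit η)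
    (hβeq : β = η * β₁ ^ 2) (hcop : IsCoprime s β) : gSym s β = 1 := by
  have hβ₁ : β₁ ≠ 0 := by rintro rfl; apply hβ; rw [hβeq]; ring
  have hrel : Multiset.Rel Associated (factors β) (factors β₁ + factors β₁) := by
    apply factors_unique irreducible_of_factor
    · intro x hx
      rcases Multiset.mem_add.mp hx with h | h <;> exact irreducible_of_factor x h
    · have h1 : Associated (β₁ ^ 2) β := ⟨hη.unit, by rw [hβeq, IsUnit.unit_spec, mul_comm]⟩
      have h2 : Associated (factors β₁ + factors β₁).prod (β₁ ^ 2) := by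
        rw [Multiset.prod_add, sq]
        exact (factors_prod hβ₁).mul_mul (factors_prod hβ₁)
      exact (factors_prod hβ).trans ((h2.trans h1).symm)
  unfold gSym
  rw [map_gQR_eq_of_rel hrel, Multiset.map_add, Multiset.prod_add]
  have key : ∀ x ∈ (factors β₁).map (fun π => gQR s π), x * x = 1 := by
    intro x hx
    obtain ⟨π, hπ, rfl⟩ := Multiset.mem_map.mp hx
    have hπβ : π ∣ β := (mem_factors_dvd hβ₁ hπ).trans ⟨η * β₁, by rw [hβeq]; ring⟩
    have hnd : ¬ π ∣ s := fun hd =>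
      (prime_of_factor π hπ).not_unit (hcop.isUnit_of_dvd' hd hπβ)
    rcases gQR_pm (s := s) hnd with h | h <;> rw [h] <;> norm_num
  exact Multiset.prod_induction (fun x : ℤ => x * x = 1) _
    (fun a b ha hb => by show a * b * (a * b) = 1; rw [mul_mul_mul_comm, ha, hb, one_mul]) (one_mul 1) key

lemma not_dvd_two {β π : GaussianInt} (hodd : ¬ (⟨1, 1⟩ : GaussianInt) ∣ β)
    (hπ : Prime π) (hdvd : π ∣ β) : ¬ π ∣ 2 := by
  intro h2
  apply hodd
  have htwo : (2 : GaussianInt) = ⟨0, -1⟩ * ⟨1, 1⟩ ^ 2 := by decide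
  have hu : IsUnit (⟨0, -1⟩ : GaussianInt) :=
    ⟨⟨⟨0, -1⟩, ⟨0, 1⟩, by decide, by decide⟩, rfl⟩
  rw [htwo] at h2
  have hsq : π ∣ (⟨1, 1⟩ : GaussianInt) ^ 2 := by
    rcases hπ.2.2 _ _ h2 with h | h
    · exact absurd (isUnit_of_dvd_unit h hu) hπ.not_unit
    · exact h
  have h1i : π ∣ (⟨1, 1⟩ : GaussianInt) := hπ.dvd_of_dvd_pow hsq
  obtain ⟨c, hc⟩ := h1i
  have hnorm : (2 : ℤ) = (Zsqrtd.norm π) * (Zsqrtd.norm c) := by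
    rw [← Zsqrtd.norm_mul, ← hc]; decide
  have hnat : 2 = (Zsqrtd.norm π).natAbs * (Zsqrtd.norm c).natAbs := by
    have := congrArg Int.natAbs hnorm
    rwa [Int.natAbs_mul] at this
  have hπu : (Zsqrtd.norm π).natAbs ≠ 1 := fun h =>
    hπ.not_unit (Zsqrtd.norm_eq_one_iff.mp h)
  have hcu : IsUnit c := by
    apply Zsqrtd.norm_eq_one_iff.mp
    have hdvd2 : (Zsqrtd.norm c).natAbs ∣ 2 := ⟨(Zsqrtd.norm π).natAbs, by rw [mul_comm]; exact hnat⟩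
    rcases (Nat.prime_two.eq_one_or_self_of_dvd _ hdvd2) with h | h
    · exact h
    · exfalso; rw [h] at hnat; omega
  obtain ⟨cu, rfl⟩ := hcu
  exact Dvd.dvd.trans ⟨↑cu⁻¹, by rw [hc, mul_assoc, Units.mul_inv, mul_one]⟩ hdvd

lemma quot_finite {β : GaussianInt} (S : Finset GaussianInt)
    (hS : ∀ γ : GaussianInt, ∃! s, s ∈ S ∧ β ∣ (γ - s)) :
    Finite (GaussianInt ⧸ Ideal.span {β}) := by
  have hsurj : Function.Surjective
      (fun s : {x // x ∈ S} => Ideal.Quotient.mk (Ideal.span {β}) (s : GaussianInt)) := by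
    intro x
    obtain ⟨γ, rfl⟩ := Ideal.Quotient.mk_surjective x
    obtain ⟨s, ⟨hsS, hdvd⟩, -⟩ := hS γ
    refine ⟨⟨s, hsS⟩, ?_⟩
    rw [Ideal.Quotient.eq]
    exact Ideal.mem_span_singleton.mpr ((neg_sub γ s) ▸ (dvd_neg.mpr hdvd))
  exact Finite.of_surjective _ hsurj

noncomputable local instance : NormalizationMonoid GaussianInt :=
  UniqueFactorizationMonoid.normalizationMonoid.toNormalizationMonoid

open Classical in
lemma exists_odd_count {β : GaussianInt} (hβ : β ≠ 0)
    (h : ¬ ∃ η β₁ : GaussianInt, IsUnit η ∧ β = η * β₁ ^ 2) :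
    ∃ π₀ ∈ normalizedFactors β, ¬ Even (Multiset.count π₀ (normalizedFactors β)) := by
  by_contra hall
  push_neg at hall
  apply h
  set m := normalizedFactors β with hm
  have hsq : (∏ p ∈ m.toFinset, p ^ (m.count p / 2)) ^ 2 = m.prod := by
    rw [Finset.prod_multiset_count m, ← Finset.prod_pow]
    apply Finset.prod_congr rfl
    intro p hp
    rw [← pow_mul]
    congr 1
    obtain ⟨r, hr⟩ := hall p (Multiset.mem_toFinset.mp hp)
    omega
  obtain ⟨u, hu⟩ := prod_normalizedFactors hβ
  exact ⟨↑u, ∏ p ∈ m.toFinset, p ^ (m.count p / 2), u.isUnit, by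
    rw [hsq, ← hu, mul_comm]⟩


/-- Let `β` be a nonzero odd Gaussian integer and let `S` be a complete system
of residues modulo `β`. If `β` is not a unit times a square then
`∑_{α mod β} [α/β] = 0`; if `β = η·β₁²` with `η` a unit then the sum equals
`φ(β)`, the number of residue classes coprime to `β`. -/
theorem stmt13 (β : GaussianInt) (hodd : ¬ (⟨1, 1⟩ : GaussianInt) ∣ β)
    (hβ : β ≠ 0) (S : Finset GaussianInt)
    (hS : ∀ γ : GaussianInt, ∃! s, s ∈ S ∧ β ∣ (γ - s)) :
    (¬ (∃ η β₁ : GaussianInt, IsUnit η ∧ β = η * β₁ ^ 2) →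
      ∑ s ∈ S, gSym s β = 0) ∧
    ((∃ η β₁ : GaussianInt, IsUnit η ∧ β = η * β₁ ^ 2) →
      ∑ s ∈ S, gSym s β = (coprimeCount S β : ℤ)) := by
  classical
  have hfin : Finite (GaussianInt ⧸ Ideal.span {β}) := quot_finite S hS
  constructor
  · -- non-square case
    intro hns
    obtain ⟨π₀, hπ₀mem, hodd_count⟩ := exists_odd_count hβ hns
    have hπ₀ : Prime π₀ := prime_of_normalized_factor π₀ hπ₀mem
    set k := Multiset.count π₀ (normalizedFactors β) with hk
    set m' := (normalizedFactors β).filter (fun q => ¬ q = π₀) with hm'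
    have hdecomp : normalizedFactors β = Multiset.replicate k π₀ + m' := by
      conv_lhs => rw [← Multiset.filter_add_not (fun q => q = π₀) (normalizedFactors β)]
      rw [Multiset.filter_eq']
    set β' := m'.prod with hβ'
    have hπ₀β : π₀ ∣ β := dvd_of_mem_normalizedFactors hπ₀mem
    have hndvd : ¬ π₀ ∣ β' := by
      intro hd
      obtain ⟨q, hq, hdq⟩ := hπ₀.exists_mem_multiset_dvd hd
      obtain ⟨hqnf, hqne⟩ := Multiset.mem_filter.mp hq
      apply hqne
      have hass : Associated π₀ q :=
        hπ₀.irreducible.associated_of_dvd (irreducible_of_normalized_factor q hqnf) hdq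
      have h1 : normalize π₀ = normalize q := normalize_eq_normalize hdq hass.symm.dvd
      rw [normalize_normalized_factor π₀ hπ₀mem, normalize_normalized_factor q hqnf] at h1
      exact h1.symm
    obtain ⟨u, hu⟩ := prod_normalizedFactors hβ
    have hprod : (normalizedFactors β).prod = π₀ ^ k * β' := by
      rw [hdecomp, Multiset.prod_add, Multiset.prod_replicate]
    set B := β' * ↑u with hB
    have hβeq : β = π₀ ^ k * B := by rw [← hu, hprod, hB]; ring
    have hndvdB : ¬ π₀ ∣ B := fun hd => hndvd ((Units.dvd_mul_right).mp hd)
    have hkodd : Odd k := Nat.not_even_iff_odd.mp hodd_count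
    have hk0 : k ≠ 0 := hkodd.pos.ne'
    have hcop : IsCoprime (π₀ ^ k) B :=
      (hπ₀.irreducible.coprime_iff_not_dvd.mpr hndvdB).pow_left
    obtain ⟨a, b, hab⟩ := hcop
    have hfinπ := quot_finite_of_dvd hπ₀β hfin
    obtain ⟨u₀, hu₀⟩ := gQR_exists_neg_one hπ₀ (not_dvd_two hodd hπ₀ hπ₀β) hfinπ
    set α₀ := b * B * u₀ + a * π₀ ^ k with hα₀
    have hmod1 : π₀ ∣ α₀ - u₀ := by
      have heq : α₀ - u₀ = π₀ ^ k * (a * (1 - u₀)) := by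
        rw [hα₀]; linear_combination u₀ * hab
      rw [heq]
      exact Dvd.dvd.mul_right (dvd_pow_self π₀ hk0) _
    have hmodB : B ∣ α₀ - 1 := ⟨b * (u₀ - 1), by rw [hα₀]; linear_combination hab⟩
    have hπ₀α₀ : ¬ π₀ ∣ α₀ := by
      intro hd
      have hdu : π₀ ∣ u₀ := by simpa using dvd_sub hd hmod1
      rw [gQR_zero_of_dvd hdu] at hu₀
      norm_num at hu₀
    have hcopα : IsCoprime α₀ β := by
      apply isCoprime_of_dvd _ _ (fun hz => hβ hz.2)
      intro z hznu hz0 hzα hzβ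
      obtain ⟨q, hqi, hqz⟩ := WfDvdMonoid.exists_irreducible_factor hznu hz0
      have hqp : Prime q := UniqueFactorizationMonoid.irreducible_iff_prime.mp hqi
      have hqα : q ∣ α₀ := hqz.trans hzα
      have hqβ : q ∣ β := hqz.trans hzβ
      rw [hβeq] at hqβ
      rcases hqp.2.2 _ _ hqβ with h | h
      · have hqπ : q ∣ π₀ := hqp.dvd_of_dvd_pow h
        exact hπ₀α₀ (((hqi.associated_of_dvd hπ₀.irreducible hqπ).symm.dvd).trans hqα)
      · have h1 : q ∣ α₀ - 1 := h.trans hmodB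
        have : q ∣ (1 : GaussianInt) := by simpa using dvd_sub hqα h1
        exact hqi.not_isUnit (isUnit_of_dvd_one this)
    have hrel : Multiset.Rel Associated (factors β) (normalizedFactors β) :=
      factors_unique irreducible_of_factor irreducible_of_normalized_factor
        ((factors_prod hβ).trans (prod_normalizedFactors hβ).symm)
    have hgα₀ : gSym α₀ β = -1 := by
      unfold gSym
      rw [map_gQR_eq_of_rel hrel, hdecomp, Multiset.map_add, Multiset.prod_add,
        Multiset.map_replicate, Multiset.prod_replicate]
      have h1 : gQR α₀ π₀ = -1 := by rw [gQR_congr hmod1]; exact hu₀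
      have h2 : (m'.map fun π => gQR α₀ π) = m'.map (fun _ => (1 : ℤ)) := by
        apply Multiset.map_congr rfl
        intro q hq
        have hqβ' : q ∣ β' := Multiset.dvd_prod hq
        have hqB : q ∣ B := hqβ'.trans (Dvd.intro _ rfl)
        have hq1 : q ∣ α₀ - 1 := hqB.trans hmodB
        rw [gQR_congr hq1]
        exact gQR_one (prime_of_normalized_factor q (Multiset.mem_filter.mp hq).1).not_unit
      rw [h1, h2, Odd.neg_one_pow hkodd, Multiset.map_const', Multiset.prod_replicate,
        one_pow, mul_one]
    -- now the summation argument
    obtain ⟨a', b', hab'⟩ := hcopα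
    have hpick : ∀ γ : GaussianInt, ∃ s, s ∈ S ∧ β ∣ (γ - s) := fun γ => (hS γ).exists
    set σ : GaussianInt → GaussianInt := fun γ => Classical.choose (hpick γ) with hσ
    have hσS : ∀ γ, σ γ ∈ S := fun γ => (Classical.choose_spec (hpick γ)).1
    have hσdvd : ∀ γ, β ∣ γ - σ γ := fun γ => (Classical.choose_spec (hpick γ)).2
    have huniq : ∀ γ t, t ∈ S → β ∣ γ - t → σ γ = t := fun γ t htS hdvd =>
      ExistsUnique.unique (hS γ) ⟨hσS γ, hσdvd γ⟩ ⟨htS, hdvd⟩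
    have hJI : ∀ s ∈ S, σ (α₀ * σ (a' * s)) = s := by
      intro s hs
      apply huniq _ _ hs
      have d2 : β ∣ a' * s - σ (a' * s) := hσdvd (a' * s)
      have heq : α₀ * σ (a' * s) - s
          = (-α₀) * (a' * s - σ (a' * s)) + (-(b' * s)) * β := by
        linear_combination s * hab'
      rw [heq]
      exact dvd_add (d2.mul_left _) (dvd_mul_left β _)
    have hIJ : ∀ s ∈ S, σ (a' * σ (α₀ * s)) = s := by
      intro s hs
      apply huniq _ _ hs
      have d2 : β ∣ α₀ * s - σ (α₀ * s) := hσdvd (α₀ * s)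
      have heq : a' * σ (α₀ * s) - s
          = (-a') * (α₀ * s - σ (α₀ * s)) + (-(b' * s)) * β := by
        linear_combination s * hab'
      rw [heq]
      exact dvd_add (d2.mul_left _) (dvd_mul_left β _)
    have hkey : ∑ s ∈ S, gSym s β = ∑ s ∈ S, gSym (σ (α₀ * s)) β :=
      Finset.sum_bij' (fun s _ => σ (a' * s)) (fun s _ => σ (α₀ * s))
        (fun s hs => hσS _) (fun s hs => hσS _)
        (fun s hs => hJI s hs) (fun s hs => hIJ s hs)
        (fun s hs => by rw [hJI s hs])
    have hneg : ∀ s ∈ S, gSym (σ (α₀ * s)) β = - gSym s β := by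
      intro s hs
      have d1 : β ∣ σ (α₀ * s) - α₀ * s := by
        have := hσdvd (α₀ * s)
        simpa using dvd_neg.mpr this
      rw [gSym_congr hβ d1, gSym_mul hβ hfin, hgα₀]
      ring
    have h2 : ∑ s ∈ S, gSym (σ (α₀ * s)) β = - ∑ s ∈ S, gSym s β := by
      rw [Finset.sum_congr rfl hneg, Finset.sum_neg_distrib]
    rw [hkey] at h2 ⊢
    linarith [h2]
  · -- square case
    rintro ⟨η, β₁, hη, hβsq⟩
    rw [← Finset.sum_filter_add_sum_filter_not S (fun s => IsCoprime s β)]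
    have hA : ∀ s ∈ S.filter (fun s => IsCoprime s β), gSym s β = 1 := fun s hs =>
      gSym_sq_eq_one hβ hη hβsq (Finset.mem_filter.mp hs).2
    have hB : ∀ s ∈ S.filter (fun s => ¬ IsCoprime s β), gSym s β = 0 := fun s hs =>
      gSym_eq_zero hβ (Finset.mem_filter.mp hs).2
    rw [Finset.sum_congr rfl hA, Finset.sum_congr rfl hB, Finset.sum_const,
      Finset.sum_const_zero, add_zero, nsmul_eq_mul, mul_one]
    have hcc : (S.filter fun s => IsCoprime s β).card = coprimeCount S β := by
      unfold coprimeCount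
      congr 1
    rw [hcc]
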